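/- arXiv:1807.00540 — 2 statements merged into one kernel-verified Lean document; each statement's English description precedes it below -/
import Mathlib

section
/- Suppose 0 < q, q₁, q₂ ≤ ∞ and let S = {j ∈ {1,2} : q_j ≥ 1}. The discrete Young convolution inequality l^{q₁}(ℤⁿ) * l^{q₂}(ℤⁿ) ⊆ l^{q}(ℤⁿ), i.e. ‖a * b‖_{l^q} ≤ C‖a‖_{l^{q₁}}‖b‖_{l^{q₂}}, holds if and only if (|S| − 1) + 1/q ≤ 1/q₁ + 1/q₂ and 1/q ≤ 1/q₁ and 1/q ≤ 1/q₂. -/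
open scoped ENNReal NNReal

/-- The (unweighted) sequence norm `‖a‖_{l^q}` for a nonnegative sequence on `ℤⁿ`,
with the supremum modification when `q = ∞`. -/
noncomputable def lqNorm {n : ℕ} (q : ℝ≥0∞) (a : (Fin n → ℤ) → ℝ≥0∞) : ℝ≥0∞ :=
  if q = ∞ then ⨆ k, a k
  else (∑' k, (a k) ^ q.toReal) ^ (1 / q.toReal)

/-- Convolution of nonnegative sequences on `ℤⁿ`: `(a*b)(k) = ∑_j a(j) b(k−j)`. -/
noncomputable def seqConv {n : ℕ} (a b : (Fin n → ℤ) → ℝ≥0∞) : (Fin n → ℤ) → ℝ≥0∞ :=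
  fun k => ∑' j, a j * b (k - j)

/-- `1/q` interpreted as a real number, with `1/∞ = 0`. -/
noncomputable def rcp (q : ℝ≥0∞) : ℝ := (q⁻¹).toReal


set_option linter.unusedSectionVars false
set_option linter.unusedVariables false
set_option linter.deprecated false



section helpers
variable {ι : Type*} [Countable ι]

lemma rpow_two_le {a b : ℝ≥0∞} {σ : ℝ} (h0 : 0 < σ) (h1 : σ ≤ 1) :
    (a + b) ^ σ ≤ a ^ σ + b ^ σ := by
  have h := ENNReal.rpow_add_rpow_le a b h0 (le_of_le_of_eq h1 rfl)
  simp only [ENNReal.rpow_one, one_div_one] at h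
  calc (a + b) ^ σ ≤ (((a ^ σ + b ^ σ) ^ (1/σ))) ^ σ := by
        exact ENNReal.rpow_le_rpow h h0.le
    _ = a ^ σ + b ^ σ := by
        rw [← ENNReal.rpow_mul, one_div, inv_mul_cancel₀ h0.ne', ENNReal.rpow_one]

lemma finset_rpow_le {s : Finset ι} (f : ι → ℝ≥0∞) {σ : ℝ} (h0 : 0 < σ) (h1 : σ ≤ 1) :
    (∑ i ∈ s, f i) ^ σ ≤ ∑ i ∈ s, f i ^ σ := by
  classical
  induction s using Finset.induction with
  | empty => simp [ENNReal.zero_rpow_of_pos h0]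
  | @insert _ _ hi ih =>
      rw [Finset.sum_insert hi, Finset.sum_insert hi]
      exact (rpow_two_le h0 h1).trans (add_le_add_right ih _)

lemma tsum_rpow_le (f : ι → ℝ≥0∞) {σ : ℝ} (h0 : 0 < σ) (h1 : σ ≤ 1) :
    (∑' i, f i) ^ σ ≤ ∑' i, f i ^ σ := by
  rw [ENNReal.tsum_eq_iSup_sum]
  have : (⨆ s : Finset ι, ∑ i ∈ s, f i) ^ σ = ⨆ s : Finset ι, (∑ i ∈ s, f i) ^ σ := by
    exact (OrderIso.map_iSup (ENNReal.orderIsoRpow σ h0) _)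
  rw [this]
  refine iSup_le fun s => (finset_rpow_le f h0 h1).trans ?_
  exact ENNReal.sum_le_tsum s

end helpers



section helpers2
variable {ι : Type*} [Countable ι]

lemma tsum_holder (f g : ι → ℝ≥0∞) {p q : ℝ} (hpq : p.HolderConjugate q) :
    ∑' i, f i * g i ≤ (∑' i, f i ^ p) ^ (1/p) * (∑' i, g i ^ q) ^ (1/q) := by
  letI : MeasurableSpace ι := ⊤
  haveI : MeasurableSingletonClass ι := ⟨fun _ => trivial⟩
  have h := ENNReal.lintegral_mul_le_Lp_mul_Lq (MeasureTheory.Measure.count (α := ι)) hpq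
    (measurable_of_countable f).aemeasurable (measurable_of_countable g).aemeasurable
  simpa [MeasureTheory.lintegral_count] using h

/-- Weighted AM-GM for tsums. -/
lemma tsum_weight2 (F G : ι → ℝ≥0∞) {α β : ℝ} (hα : 0 ≤ α) (hβ : 0 ≤ β) (h : α + β = 1) :
    ∑' i, F i ^ α * G i ^ β ≤ (∑' i, F i) ^ α * (∑' i, G i) ^ β := by
  rcases hα.eq_or_lt' with rfl | hα'
  · simp at h; simp [h]
  rcases hβ.eq_or_lt' with rfl | hβ'
  · simp at h; simp [h]
  have hpq : (1/α).HolderConjugate (1/β) := by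
    refine Real.holderConjugate_iff.mpr ⟨?_, ?_⟩
    · rw [lt_div_iff₀ hα', one_mul]; linarith
    · simp only [one_div, inv_inv]; exact h
  have := tsum_holder (fun i => F i ^ α) (fun i => G i ^ β) hpq
  simpa [← ENNReal.rpow_mul, one_div, mul_inv_cancel₀ hα'.ne', mul_inv_cancel₀ hβ'.ne'] using this

lemma tsum_weight3 (F G H : ι → ℝ≥0∞) {α β γ : ℝ} (hα : 0 ≤ α) (hβ : 0 ≤ β) (hγ : 0 ≤ γ)
    (h : α + β + γ = 1) :
    ∑' i, F i ^ α * G i ^ β * H i ^ γ ≤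
      (∑' i, F i) ^ α * (∑' i, G i) ^ β * (∑' i, H i) ^ γ := by
  rcases (add_nonneg hα hβ).eq_or_lt' with hδ | hδ
  · obtain ⟨rfl, rfl⟩ : α = 0 ∧ β = 0 := by constructor <;> linarith
    simp at h
    simp [h]
  set δ := α + β with hδdef
  have key : ∀ x y : ℝ≥0∞, x ^ α * y ^ β = (x ^ (α/δ) * y ^ (β/δ)) ^ δ := by
    intro x y
    rw [ENNReal.mul_rpow_of_nonneg _ _ (by positivity), ← ENNReal.rpow_mul, ← ENNReal.rpow_mul,
      div_mul_cancel₀ _ hδ.ne', div_mul_cancel₀ _ hδ.ne']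
  calc ∑' i, F i ^ α * G i ^ β * H i ^ γ
      = ∑' i, (F i ^ (α/δ) * G i ^ (β/δ)) ^ δ * H i ^ γ := by
        simp_rw [← key]
    _ ≤ (∑' i, F i ^ (α/δ) * G i ^ (β/δ)) ^ δ * (∑' i, H i) ^ γ := by
        exact tsum_weight2 _ _ hδ.le hγ (by linarith)
    _ ≤ ((∑' i, F i) ^ (α/δ) * (∑' i, G i) ^ (β/δ)) ^ δ * (∑' i, H i) ^ γ := by
        gcongr
        exact tsum_weight2 _ _ (by positivity) (by positivity) (by field_simp; exact hδdef.symm)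
    _ = (∑' i, F i) ^ α * (∑' i, G i) ^ β * (∑' i, H i) ^ γ := by
        rw [key]

end helpers2


variable {n : ℕ}

lemma tsum_translate (b : (Fin n → ℤ) → ℝ≥0∞) (k : Fin n → ℤ) :
    ∑' j, b (k - j) = ∑' j, b j :=
  (Equiv.subLeft k).tsum_eq b

lemma tsum_translate' (b : (Fin n → ℤ) → ℝ≥0∞) (j : Fin n → ℤ) :
    ∑' k, b (k - j) = ∑' k, b k :=
  (Equiv.subRight j).tsum_eq b

lemma conv_tsum (a b : (Fin n → ℤ) → ℝ≥0∞) :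
    ∑' k, seqConv a b k = (∑' j, a j) * (∑' j, b j) := by
  unfold seqConv
  rw [ENNReal.tsum_comm]
  calc ∑' j, ∑' k, a j * b (k - j) = ∑' j, a j * ∑' k, b (k - j) := by
        congr 1; ext j; exact ENNReal.tsum_mul_left
    _ = (∑' j, a j) * (∑' j, b j) := by
        have : ∀ j : Fin n → ℤ, ∑' k, b (k - j) = ∑' k, b k := fun j => tsum_translate' b j
        simp_rw [this]
        exact ENNReal.tsum_mul_right

lemma conv_comm (a b : (Fin n → ℤ) → ℝ≥0∞) : seqConv a b = seqConv b a := by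
  ext k
  unfold seqConv
  rw [← (Equiv.subLeft k).tsum_eq (fun j => b j * a (k - j))]
  simp [mul_comm, sub_sub_cancel]
/-- norm with reciprocal exponent `r`: `N' r = ‖·‖_{l^{1/r}}`, `N' 0 = ‖·‖_∞`. -/
noncomputable def N' {n : ℕ} (r : ℝ) (a : (Fin n → ℤ) → ℝ≥0∞) : ℝ≥0∞ :=
  if r = 0 then ⨆ k, a k else (∑' k, a k ^ (1/r)) ^ r

lemma rpow_rpow_inv {x : ℝ≥0∞} {r : ℝ} (hr : r ≠ 0) : (x ^ (1/r)) ^ r = x := by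
  rw [← ENNReal.rpow_mul, one_div, inv_mul_cancel₀ hr, ENNReal.rpow_one]

lemma rpow_inv_rpow' {x : ℝ≥0∞} {r : ℝ} (hr : r ≠ 0) : (x ^ r) ^ (1/r) = x := by
  rw [← ENNReal.rpow_mul, one_div, mul_inv_cancel₀ hr, ENNReal.rpow_one]

lemma N'_mono_fn {r : ℝ} (hr : 0 ≤ r) {a b : (Fin n → ℤ) → ℝ≥0∞} (h : ∀ k, a k ≤ b k) :
    N' r a ≤ N' r b := by
  unfold N'
  split_ifs with h0
  · exact iSup_mono h
  · have h0' : 0 < r := hr.lt_of_ne (Ne.symm h0)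
    refine ENNReal.rpow_le_rpow (ENNReal.tsum_le_tsum fun k => ?_) hr
    exact ENNReal.rpow_le_rpow (h k) (by positivity)

lemma N'_mono_exp {r r' : ℝ} (h0 : 0 ≤ r) (h : r ≤ r') (a : (Fin n → ℤ) → ℝ≥0∞) :
    N' r a ≤ N' r' a := by
  rcases eq_or_lt_of_le h with rfl | hlt
  · exact le_rfl
  have hr' : 0 < r' := h0.trans_lt hlt
  rcases h0.eq_or_lt' with rfl | hrpos
  · -- sup ≤ l^{1/r'} norm
    rw [N', N', if_pos rfl, if_neg hr'.ne']
    refine iSup_le fun k => ?_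
    calc a k = (a k ^ (1/r')) ^ r' := (rpow_rpow_inv hr'.ne').symm
      _ ≤ (∑' k, a k ^ (1/r')) ^ r' := ENNReal.rpow_le_rpow (ENNReal.le_tsum k) hr'.le
  · rw [N', N', if_neg hrpos.ne', if_neg hr'.ne']
    have hσ0 : 0 < r / r' := by positivity
    have hσ1 : r / r' ≤ 1 := by
      rw [div_le_one hr']; exact h
    have key := tsum_rpow_le (fun k => a k ^ (1/r)) hσ0 hσ1
    have hexp : ∀ k : Fin n → ℤ, (a k ^ (1/r)) ^ (r/r') = a k ^ (1/r') := by
      intro k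
      rw [← ENNReal.rpow_mul]
      congr 1
      field_simp
    simp_rw [hexp] at key
    calc (∑' k, a k ^ (1/r)) ^ r = (((∑' k, a k ^ (1/r)) ^ (r/r'))) ^ r' := by
          rw [← ENNReal.rpow_mul, div_mul_cancel₀ _ hr'.ne']
      _ ≤ (∑' k, a k ^ (1/r')) ^ r' := ENNReal.rpow_le_rpow key hr'.le

/-- triangle-type inequality for `l^{1/r}` with `r ≥ 1` (i.e. exponent ≤ 1). -/
lemma N'_conv_le_of_one_le {r : ℝ} (h1 : 1 ≤ r) (a b : (Fin n → ℤ) → ℝ≥0∞) :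
    N' r (seqConv a b) ≤ N' r a * N' r b := by
  have hr : 0 < r := lt_of_lt_of_le one_pos h1
  have hσ0 : 0 < 1/r := by positivity
  have hσ1 : 1/r ≤ 1 := by rw [div_le_one hr]; exact h1
  rw [N', N', N', if_neg hr.ne', if_neg hr.ne', if_neg hr.ne']
  have key : ∀ k, seqConv a b k ^ (1/r) ≤
      seqConv (fun j => a j ^ (1/r)) (fun j => b j ^ (1/r)) k := by
    intro k
    refine (tsum_rpow_le _ hσ0 hσ1).trans ?_
    unfold seqConv
    refine ENNReal.tsum_le_tsum fun j => ?_
    rw [ENNReal.mul_rpow_of_nonneg _ _ hσ0.le]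
  calc (∑' k, seqConv a b k ^ (1/r)) ^ r
      ≤ (∑' k, seqConv (fun j => a j ^ (1/r)) (fun j => b j ^ (1/r)) k) ^ r :=
        ENNReal.rpow_le_rpow (ENNReal.tsum_le_tsum key) hr.le
    _ = ((∑' j, a j ^ (1/r)) * (∑' j, b j ^ (1/r))) ^ r := by rw [conv_tsum]
    _ = (∑' j, a j ^ (1/r)) ^ r * (∑' j, b j ^ (1/r)) ^ r :=
        ENNReal.mul_rpow_of_nonneg _ _ hr.le


/-- Hölder endpoint: `s + t = 1`. -/
lemma conv_holder {s t : ℝ} (hs0 : 0 ≤ s) (ht0 : 0 ≤ t) (hst : s + t = 1)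
    (a b : (Fin n → ℤ) → ℝ≥0∞) (k : Fin n → ℤ) :
    seqConv a b k ≤ N' s a * N' t b := by
  rcases hs0.eq_or_lt' with rfl | hs
  · -- s = 0, t = 1
    have ht1 : t = 1 := by linarith
    subst ht1
    rw [N', N', if_pos rfl, if_neg one_ne_zero]
    simp only [one_div_one, ENNReal.rpow_one]
    calc seqConv a b k ≤ ∑' j, (⨆ i, a i) * b (k - j) :=
          ENNReal.tsum_le_tsum fun j => mul_le_mul_left (le_iSup a j) _
      _ = (⨆ i, a i) * ∑' j, b (k - j) := ENNReal.tsum_mul_left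
      _ = (⨆ i, a i) * ∑' j, b j := by rw [tsum_translate]
  rcases ht0.eq_or_lt' with rfl | ht
  · -- t = 0, s = 1
    have hs1 : s = 1 := by linarith
    subst hs1
    rw [N', N', if_pos rfl, if_neg one_ne_zero]
    simp only [one_div_one, ENNReal.rpow_one]
    calc seqConv a b k ≤ ∑' j, a j * ⨆ i, b i :=
          ENNReal.tsum_le_tsum fun j => mul_le_mul_right (le_iSup b _) _
      _ = (∑' j, a j) * ⨆ i, b i := ENNReal.tsum_mul_right
  · rw [N', N', if_neg hs.ne', if_neg ht.ne']
    have key : seqConv a b k = ∑' j, (a j ^ (1/s)) ^ s * (b (k - j) ^ (1/t)) ^ t := by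
      unfold seqConv
      congr 1; ext j
      rw [rpow_rpow_inv hs.ne', rpow_rpow_inv ht.ne']
    rw [key]
    refine (tsum_weight2 _ _ hs0 ht0 hst).trans (le_of_eq ?_)
    congr 1
    congr 1
    exact tsum_translate (fun j => b j ^ (1/t)) k

/-- Core Young inequality in reciprocal-exponent form. -/
lemma conv_young {s t : ℝ} (hs0 : 0 ≤ s) (hs1 : s ≤ 1) (ht0 : 0 ≤ t) (ht1 : t ≤ 1)
    (hst : 1 ≤ s + t) (a b : (Fin n → ℤ) → ℝ≥0∞) :
    N' (s + t - 1) (seqConv a b) ≤ N' s a * N' t b := by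
  set r : ℝ := s + t - 1 with hrdef
  have hr0 : 0 ≤ r := by simp [hrdef]; linarith
  rcases hr0.eq_or_lt' with hr | hr
  · rw [N', if_pos hr]
    exact iSup_le fun k => conv_holder hs0 ht0 (by linarith) a b k
  · have hs : 0 < s := by simp only [hrdef] at hr; linarith
    have ht : 0 < t := by simp only [hrdef] at hr; linarith
    have hsr : 0 ≤ s - r := by simp only [hrdef]; linarith
    have htr : 0 ≤ t - r := by simp only [hrdef]; linarith
    set A := ∑' j, a j ^ (1/s) with hA
    set B := ∑' j, b j ^ (1/t) with hB
    set a' : (Fin n → ℤ) → ℝ≥0∞ := fun j => a j ^ (1/s) with ha'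
    set b' : (Fin n → ℤ) → ℝ≥0∞ := fun j => b j ^ (1/t) with hb'
    have key : ∀ k, seqConv a b k ≤ (seqConv a' b' k) ^ r * A ^ (s - r) * B ^ (t - r) := by
      intro k
      have hpt : ∀ j, a j * b (k - j) =
          (a' j * b' (k - j)) ^ r * (a' j) ^ (s - r) * (b' (k - j)) ^ (t - r) := by
        intro j
        rw [ENNReal.mul_rpow_of_nonneg _ _ hr.le]
        have e1 : (a' j) ^ r * (b' (k-j)) ^ r * (a' j) ^ (s - r) * (b' (k-j)) ^ (t - r)
            = ((a' j) ^ r * (a' j) ^ (s - r)) * ((b' (k-j)) ^ r * (b' (k-j)) ^ (t - r)) := by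
          ring
        rw [e1, ← ENNReal.rpow_add_of_nonneg _ _ hr.le hsr,
          ← ENNReal.rpow_add_of_nonneg _ _ hr.le htr]
        have : r + (s - r) = s := by ring
        rw [this]
        have : r + (t - r) = t := by ring
        rw [this, ha', hb']
        simp only []
        rw [rpow_rpow_inv hs.ne', rpow_rpow_inv ht.ne']
      calc seqConv a b k
          = ∑' j, (a' j * b' (k - j)) ^ r * (a' j) ^ (s - r) * (b' (k - j)) ^ (t - r) := by
            unfold seqConv; exact tsum_congr hpt
        _ ≤ (∑' j, a' j * b' (k - j)) ^ r * (∑' j, a' j) ^ (s - r)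
              * (∑' j, b' (k - j)) ^ (t - r) :=
            tsum_weight3 _ _ _ hr.le hsr htr (by simp only [hrdef]; ring)
        _ = (seqConv a' b' k) ^ r * A ^ (s - r) * B ^ (t - r) := by
            rw [tsum_translate b' k]
            rfl
    have key2 : ∀ k, seqConv a b k ^ (1/r) ≤
        seqConv a' b' k * A ^ ((s - r)/r) * B ^ ((t - r)/r) := by
      intro k
      calc seqConv a b k ^ (1/r)
          ≤ ((seqConv a' b' k) ^ r * A ^ (s - r) * B ^ (t - r)) ^ (1/r) :=
            ENNReal.rpow_le_rpow (key k) (by positivity)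
        _ = seqConv a' b' k * A ^ ((s - r)/r) * B ^ ((t - r)/r) := by
            rw [ENNReal.mul_rpow_of_nonneg _ _ (by positivity : (0:ℝ) ≤ 1/r),
              ENNReal.mul_rpow_of_nonneg _ _ (by positivity : (0:ℝ) ≤ 1/r),
              rpow_inv_rpow' hr.ne', ← ENNReal.rpow_mul, ← ENNReal.rpow_mul,
              mul_one_div, mul_one_div]
    have key3 : (∑' k, seqConv a b k ^ (1/r)) ≤ A ^ (s/r) * B ^ (t/r) := by
      calc (∑' k, seqConv a b k ^ (1/r))
          ≤ ∑' k, seqConv a' b' k * A ^ ((s - r)/r) * B ^ ((t - r)/r) :=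
            ENNReal.tsum_le_tsum key2
        _ = (∑' k, seqConv a' b' k) * A ^ ((s - r)/r) * B ^ ((t - r)/r) := by
            rw [ENNReal.tsum_mul_right, ENNReal.tsum_mul_right]
        _ = (A * B) * A ^ ((s - r)/r) * B ^ ((t - r)/r) := by rw [conv_tsum]
        _ = (A ^ (1:ℝ) * A ^ ((s - r)/r)) * (B ^ (1:ℝ) * B ^ ((t - r)/r)) := by
            rw [ENNReal.rpow_one, ENNReal.rpow_one]; ring
        _ = A ^ (s/r) * B ^ (t/r) := by
            rw [← ENNReal.rpow_add_of_nonneg _ _ zero_le_one (by positivity),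
              ← ENNReal.rpow_add_of_nonneg _ _ zero_le_one (by positivity)]
            congr 1 <;> [skip; congr 1] <;> field_simp <;> ring_nf
    calc N' r (seqConv a b) = (∑' k, seqConv a b k ^ (1/r)) ^ r := by
          rw [N', if_neg hr.ne']
      _ ≤ (A ^ (s/r) * B ^ (t/r)) ^ r := ENNReal.rpow_le_rpow key3 hr.le
      _ = A ^ s * B ^ t := by
          rw [ENNReal.mul_rpow_of_nonneg _ _ hr.le, ← ENNReal.rpow_mul, ← ENNReal.rpow_mul,
            div_mul_cancel₀ _ hr.ne', div_mul_cancel₀ _ hr.ne']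
      _ = N' s a * N' t b := by rw [N', N', if_neg hs.ne', if_neg ht.ne']

lemma rcp_nonneg (q : ℝ≥0∞) : 0 ≤ rcp q := ENNReal.toReal_nonneg

lemma rcp_top : rcp ∞ = 0 := by simp [rcp]

lemma rcp_eq_inv_toReal {q : ℝ≥0∞} (hq : q ≠ ∞) : rcp q = (q.toReal)⁻¹ := by
  rw [rcp, ENNReal.toReal_inv]

lemma rcp_pos {q : ℝ≥0∞} (h0 : 0 < q) (hq : q ≠ ∞) : 0 < rcp q := by
  rw [rcp_eq_inv_toReal hq]
  exact inv_pos.mpr (ENNReal.toReal_pos h0.ne' hq)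

lemma lqNorm_eq_N' {q : ℝ≥0∞} (hq : 0 < q) (a : (Fin n → ℤ) → ℝ≥0∞) :
    lqNorm q a = N' (rcp q) a := by
  by_cases hqt : q = ∞
  · subst hqt
    rw [lqNorm, if_pos rfl, N', rcp_top, if_pos rfl]
  · have h1 : q.toReal ≠ 0 := (ENNReal.toReal_pos hq.ne' hqt).ne'
    rw [lqNorm, if_neg hqt, N', if_neg (by rw [rcp_eq_inv_toReal hqt]; exact inv_ne_zero h1)]
    rw [rcp_eq_inv_toReal hqt]
    simp [one_div, inv_inv]

lemma rcp_le_one_iff {q : ℝ≥0∞} (hq : 0 < q) : rcp q ≤ 1 ↔ 1 ≤ q := by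
  by_cases hqt : q = ∞
  · subst hqt; simp [rcp_top]
  · rw [rcp, show (1:ℝ) = (1:ℝ≥0∞).toReal by simp]
    rw [ENNReal.toReal_le_toReal (by simp [hq.ne']) (by simp)]
    exact ENNReal.inv_le_one

/-- The sufficiency direction, organized through `N'`. -/
lemma sufficiency {r s t : ℝ} (hr0 : 0 ≤ r) (hs0 : 0 ≤ s) (ht0 : 0 ≤ t)
    (h1 : (if s ≤ 1 then (1:ℝ) else 0) + (if t ≤ 1 then (1:ℝ) else 0) - 1 + r ≤ s + t)
    (h2 : r ≤ s) (h3 : r ≤ t) (a b : (Fin n → ℤ) → ℝ≥0∞) :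
    N' r (seqConv a b) ≤ N' s a * N' t b := by
  by_cases hs1 : s ≤ 1 <;> by_cases ht1 : t ≤ 1
  · -- classical Young, extremal r0 = s + t - 1
    rw [if_pos hs1, if_pos ht1] at h1
    calc N' r (seqConv a b) ≤ N' (s + t - 1) (seqConv a b) :=
          N'_mono_exp hr0 (by linarith) _
      _ ≤ N' s a * N' t b := conv_young hs0 hs1 ht0 ht1 (by linarith) a b
  · -- s ≤ 1 < t : extremal r0 = s, use (s, 1)-Young and lower t to 1
    push_neg at ht1
    calc N' r (seqConv a b) ≤ N' (s + 1 - 1) (seqConv a b) :=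
          N'_mono_exp hr0 (by linarith) _
      _ ≤ N' s a * N' 1 b := conv_young hs0 hs1 zero_le_one le_rfl (by linarith) a b
      _ ≤ N' s a * N' t b := mul_le_mul_right (N'_mono_exp zero_le_one ht1.le b) _
  · -- t ≤ 1 < s
    push_neg at hs1
    calc N' r (seqConv a b) ≤ N' (1 + t - 1) (seqConv a b) :=
          N'_mono_exp hr0 (by linarith) _
      _ ≤ N' 1 a * N' t b := conv_young zero_le_one le_rfl ht0 ht1 (by linarith) a b
      _ ≤ N' s a * N' t b := mul_le_mul_left (N'_mono_exp zero_le_one hs1.le a) _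
  · -- both > 1 : extremal r0 = min s t, use the `q ≤ 1` triangle inequality
    push_neg at hs1 ht1
    rcases le_total s t with hst | hst
    · calc N' r (seqConv a b) ≤ N' s (seqConv a b) := N'_mono_exp hr0 h2 _
        _ ≤ N' s a * N' s b := N'_conv_le_of_one_le hs1.le a b
        _ ≤ N' s a * N' t b := mul_le_mul_right (N'_mono_exp (by linarith) hst b) _
    · calc N' r (seqConv a b) ≤ N' t (seqConv a b) := N'_mono_exp hr0 h3 _
        _ ≤ N' t a * N' t b := N'_conv_le_of_one_le ht1.le a b
        _ ≤ N' s a * N' t b := mul_le_mul_left (N'_mono_exp (by linarith) hst a) _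

noncomputable def indC {n : ℕ} (S : Finset (Fin n → ℤ)) (c : ℝ≥0∞) : (Fin n → ℤ) → ℝ≥0∞ :=
  fun k => if k ∈ S then c else 0

lemma lqNorm_mono {q : ℝ≥0∞} (hq : 0 < q) {a b : (Fin n → ℤ) → ℝ≥0∞} (h : ∀ k, a k ≤ b k) :
    lqNorm q a ≤ lqNorm q b := by
  rw [lqNorm_eq_N' hq, lqNorm_eq_N' hq]
  exact N'_mono_fn (rcp_nonneg q) h

lemma lqNorm_indC {q : ℝ≥0∞} (hq : 0 < q) (S : Finset (Fin n → ℤ)) (hS : S.Nonempty)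
    (c : ℝ≥0∞) : lqNorm q (indC S c) = c * (S.card : ℝ≥0∞) ^ (rcp q) := by
  by_cases hqt : q = ∞
  · subst hqt
    rw [lqNorm, if_pos rfl, rcp_top, ENNReal.rpow_zero, mul_one]
    apply le_antisymm
    · exact iSup_le fun k => by unfold indC; split_ifs; exacts [le_rfl, zero_le]
    · obtain ⟨k, hk⟩ := hS
      refine le_trans (le_of_eq ?_) (le_iSup _ k)
      rw [indC, if_pos hk]
  · have hqt0 : 0 < q.toReal := ENNReal.toReal_pos hq.ne' hqt
    rw [lqNorm, if_neg hqt]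
    have hpt : ∀ k, (indC S c k) ^ q.toReal = indC S (c ^ q.toReal) k := by
      intro k; unfold indC; split_ifs with h
      · rfl
      · exact ENNReal.zero_rpow_of_pos hqt0
    have hsum : ∑' k, indC S (c ^ q.toReal) k = (S.card : ℝ≥0∞) * c ^ q.toReal := by
      rw [tsum_eq_sum (s := S) (fun k hk => by rw [indC, if_neg hk])]
      rw [Finset.sum_congr rfl (fun k hk => by rw [indC, if_pos hk]), Finset.sum_const,
        nsmul_eq_mul]
    simp_rw [hpt]
    rw [hsum, ENNReal.mul_rpow_of_nonneg _ _ (by positivity), rpow_inv_rpow' hqt0.ne',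
      mul_comm, rcp_eq_inv_toReal hqt, one_div]

lemma conv_delta (a : (Fin n → ℤ) → ℝ≥0∞) : seqConv a (indC {0} 1) = a := by
  ext k
  rw [seqConv, tsum_eq_single k ?_]
  · rw [indC, if_pos (by simp), mul_one]
  · intro j hj
    rw [indC, if_neg (by simp [sub_eq_zero]; exact fun h => hj h.symm), mul_zero]

lemma delta_conv (b : (Fin n → ℤ) → ℝ≥0∞) : seqConv (indC {0} 1) b = b := by
  ext k
  rw [seqConv, tsum_eq_single 0 ?_]
  · rw [indC, if_pos (by simp), one_mul, sub_zero]
  · intro j hj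
    rw [indC, if_neg (by simpa using hj), zero_mul]

lemma exp_le {x y : ℝ} (C : ℝ≥0∞) (hC : C ≠ ∞) (hy : 0 ≤ y)
    (h : ∀ N : ℕ, 1 ≤ N → ((N : ℝ≥0∞)) ^ x ≤ C * (N : ℝ≥0∞) ^ y) : x ≤ y := by
  by_contra hxy
  push_neg at hxy
  have hd0 : 0 < x - y := by linarith
  have hreal : ∀ N : ℕ, 1 ≤ N → ((N : ℝ)) ^ x ≤ C.toReal * ((N : ℝ)) ^ y := by
    intro N hN
    have h2 := h N hN
    have hfin : ((N : ℝ≥0∞)) ^ y ≠ ∞ :=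
      ENNReal.rpow_ne_top_of_nonneg hy (ENNReal.natCast_ne_top N)
    have hfin2 : ((N : ℝ≥0∞)) ^ x ≠ ∞ := by
      refine ne_top_of_le_ne_top (ENNReal.mul_ne_top hC hfin) h2
    have := (ENNReal.toReal_le_toReal hfin2 (ENNReal.mul_ne_top hC hfin)).mpr h2
    rw [ENNReal.toReal_mul, ← ENNReal.toReal_rpow, ← ENNReal.toReal_rpow] at this
    simpa using this
  have key : ∀ N : ℕ, 1 ≤ N → ((N : ℝ)) ^ (x - y) ≤ C.toReal := by
    intro N hN
    have hNpos : (0 : ℝ) < N := by exact_mod_cast hN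
    rw [Real.rpow_sub hNpos, div_le_iff₀ (Real.rpow_pos_of_pos hNpos y)]
    exact hreal N hN
  set R : ℝ := max C.toReal 0 + 1 with hR
  have hRpos : 0 < R := by positivity
  set K : ℝ := R ^ (1 / (x - y)) with hK
  set N : ℕ := ⌈K⌉₊ + 1 with hN
  have hKN : K < (N : ℝ) := by
    calc K ≤ (⌈K⌉₊ : ℝ) := Nat.le_ceil K
      _ < (N : ℝ) := by exact_mod_cast Nat.lt_succ_self _
  have hRN : R ≤ (N : ℝ) ^ (x - y) := by
    have hK0 : 0 ≤ K := Real.rpow_nonneg hRpos.le _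
    calc R = (R ^ (1 / (x - y))) ^ (x - y) := by
          rw [← Real.rpow_mul hRpos.le, one_div, inv_mul_cancel₀ hd0.ne', Real.rpow_one]
      _ ≤ (N : ℝ) ^ (x - y) := Real.rpow_le_rpow hK0 hKN.le hd0.le
  have := key N (by omega)
  have h3 : C.toReal ≤ max C.toReal 0 := le_max_left _ _
  linarith

/-! boxes -/
noncomputable def boxF (n N : ℕ) : Finset (Fin n → ℤ) := Fintype.piFinset fun _ => Finset.Ico (0 : ℤ) (N : ℤ)

noncomputable def boxK (n N : ℕ) : Finset (Fin n → ℤ) :=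
  Fintype.piFinset fun _ => Finset.Icc ((N : ℤ) - 1) (2 * (N : ℤ) - 2)

noncomputable def boxJ {n : ℕ} (k : Fin n → ℤ) (N : ℕ) : Finset (Fin n → ℤ) :=
  Fintype.piFinset fun i => Finset.Icc (k i - (N : ℤ) + 1) (k i)

lemma boxF_card (N : ℕ) : (boxF n N).card = N ^ n := by
  simp [boxF, Fintype.card_piFinset]

lemma boxK_card {N : ℕ} (hN : 1 ≤ N) : (boxK n N).card = N ^ n := by
  have : (2 * (N : ℤ) - 2 + 1 - ((N : ℤ) - 1)).toNat = N := by omega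
  simp [boxK, Fintype.card_piFinset, Int.card_Icc, this]

lemma boxJ_card (k : Fin n → ℤ) (N : ℕ) : (boxJ k N).card = N ^ n := by
  have : ∀ i : Fin n, (k i + 1 - (k i - (N : ℤ) + 1)).toNat = N := fun i => by omega
  simp [boxJ, Fintype.card_piFinset, Int.card_Icc, this]

lemma boxF_nonempty {N : ℕ} (hN : 1 ≤ N) : (boxF n N).Nonempty := by
  refine ⟨fun _ => 0, ?_⟩
  simp only [boxF, Fintype.mem_piFinset]
  intro i
  rw [Finset.mem_Ico]
  omega

lemma boxK_nonempty {N : ℕ} (hN : 1 ≤ N) : (boxK n N).Nonempty := by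
  refine ⟨fun _ => (N : ℤ) - 1, ?_⟩
  simp only [boxK, Fintype.mem_piFinset]
  intro i
  rw [Finset.mem_Icc]
  omega

lemma conv_box_lower {N : ℕ} (hN : 1 ≤ N) {k : Fin n → ℤ} (hk : k ∈ boxK n N) :
    ((N ^ n : ℕ) : ℝ≥0∞) ≤ seqConv (indC (boxF n (2 * N)) 1) (indC (boxF n N) 1) k := by
  simp only [boxK, Fintype.mem_piFinset, Finset.mem_Icc] at hk
  have hterm : ∀ j ∈ boxJ k N,
      (indC (boxF n (2 * N)) 1) j * (indC (boxF n N) 1) (k - j) = 1 := by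
    intro j hj
    simp only [boxJ, Fintype.mem_piFinset, Finset.mem_Icc] at hj
    rw [indC, if_pos, indC, if_pos, mul_one]
    · simp only [boxF, Fintype.mem_piFinset]
      intro i
      rw [Finset.mem_Ico, Pi.sub_apply]
      have h1 := hj i; have h2 := hk i
      omega
    · simp only [boxF, Fintype.mem_piFinset]
      intro i
      rw [Finset.mem_Ico]
      have h1 := hj i; have h2 := hk i
      push_cast
      omega
  calc ((N ^ n : ℕ) : ℝ≥0∞)
      = ∑ j ∈ boxJ k N, (indC (boxF n (2 * N)) 1) j * (indC (boxF n N) 1) (k - j) := by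
        rw [Finset.sum_congr rfl hterm, Finset.sum_const, boxJ_card, nsmul_eq_mul, mul_one]
    _ ≤ ∑' j, (indC (boxF n (2 * N)) 1) j * (indC (boxF n N) 1) (k - j) :=
        Summable.sum_le_tsum _ (fun _ _ => zero_le) ENNReal.summable
    _ = seqConv (indC (boxF n (2 * N)) 1) (indC (boxF n N) 1) k := rfl

lemma lqNorm_delta {q' : ℝ≥0∞} (hq' : 0 < q') :
    lqNorm q' (indC ({0} : Finset (Fin n → ℤ)) 1) = 1 := by
  rw [lqNorm_indC hq' _ ⟨0, Finset.mem_singleton_self 0⟩ 1]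
  simp

lemma lqNorm_boxF {q' : ℝ≥0∞} (hq' : 0 < q') {N : ℕ} (hN : 1 ≤ N) :
    lqNorm q' (indC (boxF n N) 1) = ((N : ℝ≥0∞)) ^ ((n : ℝ) * rcp q') := by
  rw [lqNorm_indC hq' _ (boxF_nonempty hN) 1, one_mul, boxF_card]
  push_cast
  rw [← ENNReal.rpow_natCast ((N : ℝ≥0∞)) n, ← ENNReal.rpow_mul]

lemma necessity (hn : 0 < n) {q q₁ q₂ : ℝ≥0∞} (hq : 0 < q) (hq₁ : 0 < q₁) (hq₂ : 0 < q₂)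
    (C : ℝ≥0)
    (h : ∀ a b : (Fin n → ℤ) → ℝ≥0∞,
      lqNorm q (seqConv a b) ≤ C * lqNorm q₁ a * lqNorm q₂ b) :
    rcp q ≤ rcp q₁ ∧ rcp q ≤ rcp q₂ ∧ 1 + rcp q ≤ rcp q₁ + rcp q₂ := by
  have hnR : (0 : ℝ) < n := by exact_mod_cast hn
  refine ⟨?_, ?_, ?_⟩
  · -- r ≤ s via b = δ
    have key : (n : ℝ) * rcp q ≤ (n : ℝ) * rcp q₁ := by
      refine exp_le (C : ℝ≥0∞) ENNReal.coe_ne_top (mul_nonneg (by positivity) (rcp_nonneg q₁)) ?_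
      intro N hN
      have hb := h (indC (boxF n N) 1) (indC {0} 1)
      rw [conv_delta, lqNorm_boxF hq hN, lqNorm_boxF hq₁ hN, lqNorm_delta hq₂, mul_one] at hb
      exact hb
    exact le_of_mul_le_mul_left key hnR
  · -- r ≤ t via a = δ
    have key : (n : ℝ) * rcp q ≤ (n : ℝ) * rcp q₂ := by
      refine exp_le (C : ℝ≥0∞) ENNReal.coe_ne_top (mul_nonneg (by positivity) (rcp_nonneg q₂)) ?_
      intro N hN
      have hb := h (indC {0} 1) (indC (boxF n N) 1)
      rw [delta_conv, lqNorm_boxF hq hN, lqNorm_boxF hq₂ hN, lqNorm_delta hq₁, mul_one] at hb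
      exact hb
    exact le_of_mul_le_mul_left key hnR
  · -- 1 + r ≤ s + t via boxes
    have key : (n : ℝ) * (1 + rcp q) ≤ (n : ℝ) * (rcp q₁ + rcp q₂) := by
      refine exp_le ((C : ℝ≥0∞) * (2 : ℝ≥0∞) ^ ((n : ℝ) * rcp q₁))
        (ENNReal.mul_ne_top ENNReal.coe_ne_top
          (ENNReal.rpow_ne_top_of_nonneg (mul_nonneg (by positivity) (rcp_nonneg q₁)) (by norm_num)))
        (mul_nonneg (by positivity) (add_nonneg (rcp_nonneg _) (rcp_nonneg _))) ?_
      intro N hN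
      have h2N : 1 ≤ 2 * N := by omega
      have hb := h (indC (boxF n (2 * N)) 1) (indC (boxF n N) 1)
      rw [lqNorm_boxF hq₁ h2N, lqNorm_boxF hq₂ hN] at hb
      have hlow : ((N : ℝ≥0∞)) ^ ((n : ℝ) * (1 + rcp q)) ≤
          lqNorm q (seqConv (indC (boxF n (2 * N)) 1) (indC (boxF n N) 1)) := by
        have hmono := lqNorm_mono hq (a := indC (boxK n N) ((N ^ n : ℕ) : ℝ≥0∞))
          (b := seqConv (indC (boxF n (2 * N)) 1) (indC (boxF n N) 1)) ?_
        · refine le_trans (le_of_eq ?_) hmono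
          rw [lqNorm_indC hq _ (boxK_nonempty hN) _, boxK_card hN]
          push_cast
          rw [← ENNReal.rpow_natCast ((N : ℝ≥0∞)) n, ← ENNReal.rpow_mul,
            ← ENNReal.rpow_add_of_nonneg _ _ (by positivity) (mul_nonneg (by positivity) (rcp_nonneg q))]
          congr 1
          ring
        · intro k
          rw [indC]
          split_ifs with hk
          · exact conv_box_lower hN hk
          · exact zero_le
      have hcast : ((2 * N : ℕ) : ℝ≥0∞) = 2 * (N : ℝ≥0∞) := by push_cast; ring
      rw [hcast, ENNReal.mul_rpow_of_nonneg _ _ (mul_nonneg (by positivity) (rcp_nonneg q₁))] at hb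
      calc ((N : ℝ≥0∞)) ^ ((n : ℝ) * (1 + rcp q))
          ≤ (C : ℝ≥0∞) * ((2:ℝ≥0∞) ^ ((n:ℝ) * rcp q₁) * (N:ℝ≥0∞) ^ ((n:ℝ) * rcp q₁))
              * (N:ℝ≥0∞) ^ ((n:ℝ) * rcp q₂) := le_trans hlow hb
        _ = ((C : ℝ≥0∞) * (2:ℝ≥0∞) ^ ((n:ℝ) * rcp q₁)) *
              ((N:ℝ≥0∞) ^ ((n:ℝ) * rcp q₁) * (N:ℝ≥0∞) ^ ((n:ℝ) * rcp q₂)) := by ring_nf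
        _ = ((C : ℝ≥0∞) * (2:ℝ≥0∞) ^ ((n:ℝ) * rcp q₁)) *
              (N:ℝ≥0∞) ^ ((n : ℝ) * (rcp q₁ + rcp q₂)) := by
            rw [← ENNReal.rpow_add_of_nonneg _ _ (mul_nonneg (by positivity) (rcp_nonneg q₁))
              (mul_nonneg (by positivity) (rcp_nonneg q₂))]
            congr 1
            ring
    exact le_of_mul_le_mul_left key hnR

/-- Sharp discrete Young inequality: `l^{q₁} * l^{q₂} ⊆ l^q` holds iff
`(|S|−1) + 1/q ≤ 1/q₁ + 1/q₂`, `1/q ≤ 1/q₁` and `1/q ≤ 1/q₂`,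
where `S = {j ∈ {1,2} : q_j ≥ 1}`. -/
theorem stmt2 (n : ℕ) (hn : 0 < n) (q q₁ q₂ : ℝ≥0∞)
    (hq : 0 < q) (hq₁ : 0 < q₁) (hq₂ : 0 < q₂) :
    (∃ C : ℝ≥0, ∀ a b : (Fin n → ℤ) → ℝ≥0∞,
        lqNorm q (seqConv a b) ≤ C * lqNorm q₁ a * lqNorm q₂ b) ↔
      ((((if 1 ≤ q₁ then (1 : ℝ) else 0) + (if 1 ≤ q₂ then (1 : ℝ) else 0)) - 1)
          + rcp q ≤ rcp q₁ + rcp q₂ ∧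
        rcp q ≤ rcp q₁ ∧ rcp q ≤ rcp q₂) := by
  constructor
  · rintro ⟨C, h⟩
    obtain ⟨h2, h3, h1⟩ := necessity hn hq hq₁ hq₂ C h
    refine ⟨?_, h2, h3⟩
    have ht0 := rcp_nonneg q₂
    have hs0 := rcp_nonneg q₁
    split_ifs <;> linarith
  · rintro ⟨h1, h2, h3⟩
    refine ⟨1, fun a b => ?_⟩
    rw [ENNReal.coe_one, one_mul, lqNorm_eq_N' hq, lqNorm_eq_N' hq₁, lqNorm_eq_N' hq₂]
    refine sufficiency (rcp_nonneg q) (rcp_nonneg q₁) (rcp_nonneg q₂) ?_ h2 h3 a b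
    have e1 : (if rcp q₁ ≤ 1 then (1:ℝ) else 0) = (if 1 ≤ q₁ then (1:ℝ) else 0) :=
      if_congr (rcp_le_one_iff hq₁) rfl rfl
    have e2 : (if rcp q₂ ≤ 1 then (1:ℝ) else 0) = (if 1 ≤ q₂ then (1:ℝ) else 0) :=
      if_congr (rcp_le_one_iff hq₂) rfl rfl
    rw [e1, e2]
    exact h1
end

section
/- Let α ∈ [0, 1). There exists δ > 0 such that the family of balls {B(⟨k⟩^{α/(1−α)} k, δ ⟨k⟩^{α/(1−α)})}_{k ∈ ℤⁿ} is pairwise disjoint. -/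
/-- The Japanese bracket `⟨k⟩ = (1+|k|²)^{1/2}` for `k ∈ ℤⁿ`. -/
noncomputable def jpw {n : ℕ} (k : Fin n → ℤ) : ℝ :=
  (1 + ∑ i, ((k i : ℝ)) ^ 2) ^ ((1 : ℝ) / 2)

/-- `k ∈ ℤⁿ` viewed as a point of Euclidean space. -/
noncomputable def ipt {n : ℕ} (k : Fin n → ℤ) : EuclideanSpace ℝ (Fin n) :=
  WithLp.toLp 2 (fun i => (k i : ℝ))

lemma norm_ipt_eq {n : ℕ} (k : Fin n → ℤ) :
    ‖ipt k‖ = Real.sqrt (∑ i, ((k i : ℝ)) ^ 2) := by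
  rw [EuclideanSpace.norm_eq]
  congr 1
  apply Finset.sum_congr rfl
  intro i _
  simp [ipt, sq_abs]

lemma jpw_eq_sqrt {n : ℕ} (k : Fin n → ℤ) :
    jpw k = Real.sqrt (1 + ‖ipt k‖ ^ 2) := by
  have h : ‖ipt k‖ ^ 2 = ∑ i, ((k i : ℝ)) ^ 2 := by
    rw [norm_ipt_eq, Real.sq_sqrt]
    positivity
  rw [h, jpw, ← Real.sqrt_eq_rpow]

lemma one_le_jpw {n : ℕ} (k : Fin n → ℤ) : 1 ≤ jpw k := by
  rw [jpw_eq_sqrt]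
  have : (1:ℝ) = Real.sqrt 1 := by simp
  rw [this]
  apply Real.sqrt_le_sqrt
  nlinarith [sq_nonneg ‖ipt k‖]

lemma norm_ipt_le_jpw {n : ℕ} (k : Fin n → ℤ) : ‖ipt k‖ ≤ jpw k := by
  rw [jpw_eq_sqrt]
  have h := Real.sqrt_le_sqrt (show ‖ipt k‖^2 ≤ 1 + ‖ipt k‖^2 by linarith)
  rwa [Real.sqrt_sq (norm_nonneg _)] at h

lemma norm_le_of_jpw_le {n : ℕ} {k l : Fin n → ℤ} (h : jpw k ≤ jpw l) :
    ‖ipt k‖ ≤ ‖ipt l‖ := by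
  rw [jpw_eq_sqrt, jpw_eq_sqrt] at h
  have h2 : (1:ℝ) + ‖ipt k‖^2 ≤ 1 + ‖ipt l‖^2 := by
    by_contra hc
    push_neg at hc
    have := Real.sqrt_lt_sqrt (by positivity) hc
    linarith
  nlinarith [norm_nonneg (ipt k), norm_nonneg (ipt l)]

lemma one_le_norm_sub {n : ℕ} {k l : Fin n → ℤ} (h : k ≠ l) :
    1 ≤ ‖ipt l - ipt k‖ := by
  obtain ⟨i, hi⟩ := Function.ne_iff.mp h
  have h1 : (1:ℝ) ≤ |(l i : ℝ) - (k i : ℝ)| := by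
    have : l i - k i ≠ 0 := sub_ne_zero.mpr (Ne.symm hi)
    have := Int.one_le_abs this
    -- cast
    rw [← Int.cast_sub]
    exact_mod_cast this
  calc (1:ℝ) ≤ |(l i : ℝ) - (k i : ℝ)| := h1
    _ ≤ ‖ipt l - ipt k‖ := by
        have h2 : |(l i : ℝ) - (k i : ℝ)| = ‖(ipt l - ipt k) i‖ := by
          simp [ipt]
        rw [h2]
        rw [EuclideanSpace.norm_eq]
        have h3 : ‖(ipt l - ipt k) i‖ ^ 2 ≤ ∑ j, ‖(ipt l - ipt k) j‖ ^ 2 :=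
          Finset.single_le_sum (f := fun j => ‖(ipt l - ipt k) j‖ ^ 2)
            (fun j _ => by positivity) (Finset.mem_univ i)
        calc ‖(ipt l - ipt k) i‖ = Real.sqrt (‖(ipt l - ipt k) i‖ ^ 2) :=
              (Real.sqrt_sq (norm_nonneg _)).symm
          _ ≤ Real.sqrt (∑ j, ‖(ipt l - ipt k) j‖ ^ 2) := Real.sqrt_le_sqrt h3


set_option maxHeartbeats 1000000 in
lemma key_lemma {n : ℕ} (β : ℝ) (hβ : 0 ≤ β) (k l : Fin n → ℤ) (hne : k ≠ l)
    (hkl : jpw k ≤ jpw l) :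
    (1/2:ℝ)^(β+2) * jpw k ^ β + (1/2:ℝ)^(β+2) * jpw l ^ β
      ≤ dist ((jpw k ^ β) • ipt k) ((jpw l ^ β) • ipt l) := by
  have hjk : 1 ≤ jpw k := one_le_jpw k
  have hjl : 1 ≤ jpw l := one_le_jpw l
  set u := ipt k with hu
  set v := ipt l with hv
  set A := jpw k ^ β with hA
  set B := jpw l ^ β with hB
  set c := ((1:ℝ)/2)^(β+2) with hc
  have hc0 : 0 < c := Real.rpow_pos_of_pos (by norm_num) _
  have hA1 : 1 ≤ A := Real.one_le_rpow hjk hβ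
  have hB1 : 1 ≤ B := Real.one_le_rpow hjl hβ
  have hAB : A ≤ B := Real.rpow_le_rpow (by linarith) hkl hβ
  have hab : ‖u‖ ≤ ‖v‖ := norm_le_of_jpw_le hkl
  have hd : dist (A • u) (B • v) = ‖B • v - A • u‖ := by
    rw [dist_eq_norm, ← norm_neg]; congr 1; abel
  have hvu : 1 ≤ ‖v - u‖ := one_le_norm_sub hne
  -- first lower bound : A * ‖v - u‖ ≤ ‖B • v - A • u‖
  have e1 : (inner ℝ (B • v - A • u) (v - u) : ℝ)
      = B * (inner ℝ v v : ℝ) - B * (inner ℝ v u : ℝ) - A * (inner ℝ u v : ℝ)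
        + A * (inner ℝ u u : ℝ) := by
    simp only [inner_sub_left, inner_sub_right, real_inner_smul_left]
    ring
  have e2 : ‖v - u‖ ^ 2 = (inner ℝ v v : ℝ) - 2 * (inner ℝ u v : ℝ) + (inner ℝ u u : ℝ) := by
    rw [← real_inner_self_eq_norm_sq]
    simp only [inner_sub_left, inner_sub_right]
    rw [real_inner_comm v u]
    ring
  have huv : (inner ℝ u v : ℝ) ≤ ‖u‖ * ‖v‖ := real_inner_le_norm u v
  have hvv : (inner ℝ v v : ℝ) = ‖v‖ ^ 2 := real_inner_self_eq_norm_sq v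
  have hcs : (inner ℝ (B • v - A • u) (v - u) : ℝ) ≤ ‖B • v - A • u‖ * ‖v - u‖ :=
    real_inner_le_norm _ _
  have hlow1 : A * ‖v - u‖ ≤ ‖B • v - A • u‖ := by
    have hmono : A * ‖v - u‖ ^ 2 ≤ (inner ℝ (B • v - A • u) (v - u) : ℝ) := by
      have hq : (inner ℝ u v : ℝ) ≤ (inner ℝ v v : ℝ) := by
        rw [hvv]
        nlinarith [norm_nonneg u, norm_nonneg v]
      have key0 : 0 ≤ (B - A) * ((inner ℝ v v : ℝ) - (inner ℝ u v : ℝ)) :=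
        mul_nonneg (by linarith) (by linarith)
      rw [e1, e2]
      have hcomm : (inner ℝ v u : ℝ) = (inner ℝ u v : ℝ) := real_inner_comm u v
      nlinarith [key0, hcomm]
    nlinarith [norm_nonneg (B • v - A • u)]
  -- second lower bound : B * ‖v‖ - A * ‖u‖ ≤ ‖B • v - A • u‖
  have hlow2 : B * ‖v‖ - A * ‖u‖ ≤ ‖B • v - A • u‖ := by
    have h := norm_sub_norm_le (B • v) (A • u)
    rw [norm_smul, norm_smul, Real.norm_eq_abs, Real.norm_eq_abs,
      abs_of_nonneg (by linarith : (0:ℝ) ≤ B), abs_of_nonneg (by linarith : (0:ℝ) ≤ A)] at h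
    linarith
  rw [hd]
  have h2b : (1:ℝ) ≤ (2:ℝ) ^ β := Real.one_le_rpow one_le_two hβ
  have hpow : (2:ℝ) ^ (β + 1) = 2 * (2:ℝ) ^ β := by
    rw [Real.rpow_add (by norm_num : (0:ℝ) < 2), Real.rpow_one]; ring
  have hcmul : c * (2:ℝ) ^ (β + 1) = 1 / 2 := by
    have h1 : c * (2:ℝ) ^ (β + 2) = 1 := by
      rw [hc, ← Real.mul_rpow (by norm_num) (by norm_num)]
      norm_num
    have h2 : (2:ℝ) ^ (β + 2) = (2:ℝ) ^ (β + 1) * 2 := by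
      rw [show β + 2 = (β + 1) + 1 by ring, Real.rpow_add (by norm_num : (0:ℝ) < 2),
        Real.rpow_one]
    rw [h2] at h1
    linarith
  rcases le_or_gt (jpw l) (2 * jpw k) with hcase | hcase
  · -- comparable case
    have hB2 : B ≤ (2:ℝ) ^ β * A := by
      rw [hB, hA, ← Real.mul_rpow (by norm_num) (by linarith)]
      exact Real.rpow_le_rpow (by linarith) hcase hβ
    have s1 : c * B ≤ c * ((2:ℝ)^β * A) := mul_le_mul_of_nonneg_left hB2 hc0.le
    have s2 : c * (1 + (2:ℝ)^β) ≤ c * (2:ℝ)^(β+1) :=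
      mul_le_mul_of_nonneg_left (by linarith) hc0.le
    have s3 : c * (1 + (2:ℝ)^β) * A ≤ c * (2:ℝ)^(β+1) * A :=
      mul_le_mul_of_nonneg_right s2 (by linarith)
    have s4 : A * 1 ≤ A * ‖v - u‖ := mul_le_mul_of_nonneg_left hvu (by linarith)
    have s5 : c * (2:ℝ)^(β+1) * A = (1/2) * A := by rw [hcmul]
    linarith [s1, s3, s4, s5, hlow1, hA1]
  · -- far case
    have hL2 : 2 < jpw l := by linarith
    have hb2 : jpw l ^ 2 = 1 + ‖v‖ ^ 2 := by
      have h0 : (0:ℝ) ≤ 1 + ‖ipt l‖ ^ 2 := by positivity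
      rw [jpw_eq_sqrt l, Real.sq_sqrt h0]
    have hb34 : 3 / 4 * jpw l ≤ ‖v‖ := by
      nlinarith [norm_nonneg v, hb2]
    have hule : ‖u‖ ≤ jpw k := norm_ipt_le_jpw k
    have hc14 : c ≤ 1 / 4 := by
      have h1 : c ≤ ((1:ℝ)/2) ^ (2:ℝ) :=
        Real.rpow_le_rpow_of_exponent_ge (by norm_num) (by norm_num) (by linarith)
      have h2 : ((1:ℝ)/2) ^ (2:ℝ) = 1 / 4 := by
        rw [show (2:ℝ) = ((2:ℕ):ℝ) by norm_num, Real.rpow_natCast]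
        norm_num
      linarith
    have hAu : A * ‖u‖ ≤ B * (jpw l / 2) := by
      have : A * ‖u‖ ≤ B * jpw k := by
        apply mul_le_mul hAB hule (norm_nonneg u) (by linarith)
      linarith [mul_le_mul_of_nonneg_left (by linarith : jpw k ≤ jpw l / 2)
        (by linarith : (0:ℝ) ≤ B)]
    have hBv : B * (jpw l / 4) ≤ B * ‖v‖ - A * ‖u‖ := by
      have h5 := mul_le_mul_of_nonneg_left hb34 (by linarith : (0:ℝ) ≤ B)
      linarith
    have s1 : c * A ≤ (1/4) * A := mul_le_mul_of_nonneg_right hc14 (by linarith)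
    have s2 : c * B ≤ (1/4) * B := mul_le_mul_of_nonneg_right hc14 (by linarith)
    have s3 : B * (1/2) ≤ B * (jpw l / 4) :=
      mul_le_mul_of_nonneg_left (by linarith) (by linarith)
    linarith

/-- For `α ∈ [0,1)` there is `δ > 0` such that the balls
`B(⟨k⟩^{α/(1−α)} k, δ⟨k⟩^{α/(1−α)})`, `k ∈ ℤⁿ`, are pairwise disjoint. -/
theorem stmt19 (n : ℕ) (α : ℝ) (hα0 : 0 ≤ α) (hα1 : α < 1) :
    ∃ δ > (0 : ℝ), Pairwise fun k l : Fin n → ℤ =>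
      Disjoint
        (Metric.ball ((jpw k ^ (α / (1 - α))) • ipt k) (δ * jpw k ^ (α / (1 - α))))
        (Metric.ball ((jpw l ^ (α / (1 - α))) • ipt l) (δ * jpw l ^ (α / (1 - α)))) := by
  set β := α / (1 - α) with hβdef
  have hβ : 0 ≤ β := div_nonneg hα0 (by linarith)
  refine ⟨((1:ℝ)/2)^(β+2), Real.rpow_pos_of_pos (by norm_num) _, ?_⟩
  intro k l hne
  rcases le_total (jpw k) (jpw l) with h | h
  · exact Metric.ball_disjoint_ball (key_lemma β hβ k l hne h)
  · have hk := key_lemma β hβ l k hne.symm h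
    rw [dist_comm] at hk
    exact Metric.ball_disjoint_ball (by linarith)
end
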